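/- Under the stochastic optimal control setup with weight function w and the Bayesian construction from i.i.d. samples of P^c, for any ε > 0 and δ ∈ (0,1) there exists N(J,ε,δ) > 0 such that for all N ≥ N(J,ε,δ), the probability (over the samples ξ̂_1,…,ξ̂_N) that ‖V̂_N* − V*‖_w < ε is at least 1 − δ, where V̂_N* is the fixed point of the robust Bellman operator with Bayesian ambiguity set 𝔓(P̂_N, r̂_N) and V* is the fixed point of the true Bellman operator under P^c. -/

import Mathlib

open Filter Topology MeasureTheory ProbabilityTheory

noncomputable section

/-- Number of observations among the first `N` samples equal to the `j`-th support point. -/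
def sampleCount {Ω : Type*} {J : ℕ} (X : ℕ → Ω → Fin J) (j : Fin J) (N : ℕ) (ω : Ω) : ℕ :=
  ((Finset.range N).filter (fun i => X i ω = j)).card

/-- Bayesian reference probability `p̂_{j,N} = (τ_{j,0} - 1 + Σ_{i<N} 1{ξ̂_i = ξ^j}) / (Σ_k τ_{k,0} - J + N)`. -/
def bayesCenter {Ω : Type*} {J : ℕ} (τ0 : Fin J → ℝ) (X : ℕ → Ω → Fin J)
    (N : ℕ) (ω : Ω) (j : Fin J) : ℝ :=
  (τ0 j - 1 + (sampleCount X j N ω : ℝ)) / (∑ k, τ0 k - J + N)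

/-- Bayesian radius `r̂_{j,N} = z · sqrt( p̂_{j,N}(1 - p̂_{j,N}) / (Σ_k τ_{k,N} - J) )`. -/
def bayesRadius {Ω : Type*} {J : ℕ} (τ0 : Fin J → ℝ) (z : ℝ) (X : ℕ → Ω → Fin J)
    (N : ℕ) (ω : Ω) (j : Fin J) : ℝ :=
  z * Real.sqrt (bayesCenter τ0 X N ω j * (1 - bayesCenter τ0 X N ω j) / (∑ k, τ0 k - J + N))

/-- Box-type ambiguity set `𝔓(P,r) = {Q ∈ Δ_J : P_j - r_j ≤ Q_j ≤ P_j + r_j ∀ j}`. -/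
def boxSet (J : ℕ) (P r : Fin J → ℝ) : Set (Fin J → ℝ) :=
  {Q | Q ∈ stdSimplex ℝ (Fin J) ∧ ∀ j, P j - r j ≤ Q j ∧ Q j ≤ P j + r j}

/-- Expectation of `h` under the probability vector `Q`. -/
def expec {J : ℕ} (Q h : Fin J → ℝ) : ℝ := ∑ j, Q j * h j

/-- Weighted sup norm `‖V‖_w = sup_{s ∈ S} |V s| / w s`. -/
noncomputable def wSupNorm {m : ℕ} (S : Set (Fin m → ℝ)) (w V : (Fin m → ℝ) → ℝ) : ℝ :=
  ⨆ s : S, |V (s : Fin m → ℝ)| / w (s : Fin m → ℝ)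

/-- Distributionally robust Bellman operator. -/
noncomputable def robustBellman {J m n : ℕ} (A : Set (Fin n → ℝ)) (amb : Set (Fin J → ℝ))
    (C : (Fin m → ℝ) → (Fin n → ℝ) → Fin J → ℝ)
    (g : (Fin m → ℝ) → (Fin n → ℝ) → Fin J → Fin m → ℝ)
    (γ : ℝ) (V : (Fin m → ℝ) → ℝ) (s : Fin m → ℝ) : ℝ :=
  ⨅ a : A, ⨆ Q : amb,
    expec (Q : Fin J → ℝ) (fun j => C s (a : Fin n → ℝ) j + γ * V (g s (a : Fin n → ℝ) j))

/-- True Bellman operator under the distribution `Pc`. -/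
noncomputable def trueBellman {J m n : ℕ} (A : Set (Fin n → ℝ)) (Pc : Fin J → ℝ)
    (C : (Fin m → ℝ) → (Fin n → ℝ) → Fin J → ℝ)
    (g : (Fin m → ℝ) → (Fin n → ℝ) → Fin J → Fin m → ℝ)
    (γ : ℝ) (V : (Fin m → ℝ) → ℝ) (s : Fin m → ℝ) : ℝ :=
  ⨅ a : A, expec Pc (fun j => C s (a : Fin n → ℝ) j + γ * V (g s (a : Fin n → ℝ) j))

/-- Policy-evaluation Bellman operator under the distribution `Pc`. -/
noncomputable def policyBellman {J m n : ℕ} (Pc : Fin J → ℝ)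
    (C : (Fin m → ℝ) → (Fin n → ℝ) → Fin J → ℝ)
    (g : (Fin m → ℝ) → (Fin n → ℝ) → Fin J → Fin m → ℝ)
    (π : (Fin m → ℝ) → (Fin n → ℝ))
    (γ : ℝ) (V : (Fin m → ℝ) → ℝ) (s : Fin m → ℝ) : ℝ :=
  expec Pc (fun j => C s (π s) j + γ * V (g s (π s) j))


lemma my_abs_ciInf_sub {ι : Sort*} [Nonempty ι] {F G : ι → ℝ} {c : ℝ}
    (hF : BddBelow (Set.range F)) (hG : BddBelow (Set.range G))
    (h : ∀ i, |F i - G i| ≤ c) : |(⨅ i, F i) - ⨅ i, G i| ≤ c := by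
  have k1 : (⨅ i, F i) - c ≤ ⨅ i, G i := by
    refine le_ciInf (fun i => ?_)
    have h1 := ciInf_le hF i
    have h2 := (abs_sub_le_iff.1 (h i)).1
    linarith
  have k2 : (⨅ i, G i) - c ≤ ⨅ i, F i := by
    refine le_ciInf (fun i => ?_)
    have h1 := ciInf_le hG i
    have h2 := (abs_sub_le_iff.1 (h i)).2
    linarith
  rw [abs_sub_le_iff]
  constructor <;> linarith

lemma my_abs_ciSup_sub {ι : Sort*} [Nonempty ι] {F G : ι → ℝ} {c : ℝ}
    (hF : BddAbove (Set.range F)) (hG : BddAbove (Set.range G))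
    (h : ∀ i, |F i - G i| ≤ c) : |(⨆ i, F i) - ⨆ i, G i| ≤ c := by
  rw [abs_sub_le_iff]
  constructor
  · rw [sub_le_iff_le_add]
    refine ciSup_le (fun i => ?_)
    have h1 := le_ciSup hG i
    have h2 := (abs_sub_le_iff.1 (h i)).1
    linarith
  · rw [sub_le_iff_le_add]
    refine ciSup_le (fun i => ?_)
    have h1 := le_ciSup hF i
    have h2 := (abs_sub_le_iff.1 (h i)).2
    linarith

lemma my_expec_abs_le {J : ℕ} {Q h : Fin J → ℝ} {B : ℝ}
    (hQ : Q ∈ stdSimplex ℝ (Fin J)) (hb : ∀ j, |h j| ≤ B) : |expec Q h| ≤ B := by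
  calc |expec Q h| ≤ ∑ j, |Q j * h j| := Finset.abs_sum_le_sum_abs _ _
    _ ≤ ∑ j, Q j * B := by
        refine Finset.sum_le_sum (fun j _ => ?_)
        rw [abs_mul, abs_of_nonneg (hQ.1 j)]
        exact mul_le_mul_of_nonneg_left (hb j) (hQ.1 j)
    _ = B := by rw [← Finset.sum_mul, hQ.2, one_mul]

lemma my_expec_sub_same {J : ℕ} {Q h1 h2 : Fin J → ℝ} {B : ℝ}
    (hQ : Q ∈ stdSimplex ℝ (Fin J)) (hb : ∀ j, |h1 j - h2 j| ≤ B) :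
    |expec Q h1 - expec Q h2| ≤ B := by
  have : expec Q h1 - expec Q h2 = expec Q (fun j => h1 j - h2 j) := by
    simp [expec, ← Finset.sum_sub_distrib, mul_sub]
  rw [this]
  exact my_expec_abs_le hQ hb

lemma my_expec_sub_prob {J : ℕ} {Q P h : Fin J → ℝ} {B : ℝ} (_hB : 0 ≤ B)
    (hb : ∀ j, |h j| ≤ B) :
    |expec Q h - expec P h| ≤ B * ∑ j, |Q j - P j| := by
  have : expec Q h - expec P h = ∑ j, (Q j - P j) * h j := by
    simp [expec, ← Finset.sum_sub_distrib, sub_mul]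
  rw [this, Finset.mul_sum]
  calc |∑ j, (Q j - P j) * h j| ≤ ∑ j, |(Q j - P j) * h j| := Finset.abs_sum_le_sum_abs _ _
    _ ≤ ∑ j, B * |Q j - P j| := by
        refine Finset.sum_le_sum (fun j _ => ?_)
        rw [abs_mul, mul_comm]
        exact mul_le_mul_of_nonneg_right (hb j) (abs_nonneg _)

lemma my_det_bound
    {J m n : ℕ}
    {S : Set (Fin m → ℝ)} (hS : S.Nonempty)
    {A : Set (Fin n → ℝ)} (hA : A.Nonempty)
    {C : (Fin m → ℝ) → (Fin n → ℝ) → Fin J → ℝ}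
    {g : (Fin m → ℝ) → (Fin n → ℝ) → Fin J → Fin m → ℝ}
    (hgS : ∀ s ∈ S, ∀ a ∈ A, ∀ j, g s a j ∈ S)
    {γ κ Cbar : ℝ} (hγ0 : 0 ≤ γ) (hκ0 : 0 ≤ κ) (hγκ : γ * κ < 1) (hCbar0 : 0 < Cbar)
    {w : (Fin m → ℝ) → ℝ} (hw1 : ∀ s ∈ S, 1 ≤ w s)
    (hCb : ∀ s ∈ S, ∀ a ∈ A, ∀ j, |C s a j| ≤ Cbar * w s)
    (hdrift : ∀ s ∈ S, ∀ a ∈ A, ∀ j, w (g s a j) ≤ κ * w s)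
    {Pc : Fin J → ℝ} (hPc : Pc ∈ stdSimplex ℝ (Fin J))
    {Vstar : (Fin m → ℝ) → ℝ} {Mstar : ℝ} (hM0 : 0 ≤ Mstar)
    (hVstarBd : ∀ s ∈ S, |Vstar s| ≤ Mstar * w s)
    (hVstarFix : ∀ s ∈ S, Vstar s = trueBellman A Pc C g γ Vstar s)
    {Phat r : Fin J → ℝ} (hPhat : Phat ∈ stdSimplex ℝ (Fin J)) (hr : ∀ j, 0 ≤ r j)
    {Vh : (Fin m → ℝ) → ℝ} (hVhBd : ∃ M, ∀ s ∈ S, |Vh s| ≤ M * w s)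
    (hVhFix : ∀ s ∈ S, Vh s = robustBellman A (boxSet J Phat r) C g γ Vh s)
    {ε : ℝ} (hε : 0 < ε)
    (ht : (∑ j, (|Phat j - Pc j| + r j)) < ε * (1 - γ * κ) / (Cbar + γ * (κ * Mstar))) :
    wSupNorm S w (fun s => Vh s - Vstar s) < ε := by
  haveI : Nonempty ↥S := hS.to_subtype
  haveI : Nonempty ↥A := hA.to_subtype
  have hPhatBox : Phat ∈ boxSet J Phat r :=
    ⟨hPhat, fun j => ⟨by linarith [hr j], by linarith [hr j]⟩⟩
  haveI : Nonempty ↥(boxSet J Phat r) := ⟨⟨Phat, hPhatBox⟩⟩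
  set K1 : ℝ := Cbar + γ * (κ * Mstar) with hK1def
  have hK1 : 0 < K1 := by positivity
  set t : ℝ := ∑ j, (|Phat j - Pc j| + r j) with htdef
  have ht0 : 0 ≤ t := Finset.sum_nonneg (fun j _ => add_nonneg (abs_nonneg _) (hr j))
  obtain ⟨Mh, hMh⟩ := hVhBd
  -- the sup defining the norm is bounded above
  have hwpos : ∀ s ∈ S, 0 < w s := fun s hs => lt_of_lt_of_le zero_lt_one (hw1 s hs)
  have hBddD : BddAbove (Set.range fun s : S => |Vh s - Vstar s| / w (s : Fin m → ℝ)) := by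
    refine ⟨Mh + Mstar, ?_⟩
    rintro x ⟨s, rfl⟩
    have hws := hwpos s s.2
    rw [div_le_iff₀ hws]
    calc |Vh s - Vstar s| ≤ |Vh (s : Fin m → ℝ)| + |Vstar (s : Fin m → ℝ)| := abs_sub _ _
      _ ≤ Mh * w s + Mstar * w s := add_le_add (hMh s s.2) (hVstarBd s s.2)
      _ = (Mh + Mstar) * w s := by ring
  set D : ℝ := wSupNorm S w (fun s => Vh s - Vstar s) with hDdef
  have hDle : ∀ s ∈ S, |Vh s - Vstar s| ≤ D * w s := by
    intro s hs
    have h1 : |Vh s - Vstar s| / w s ≤ D := le_ciSup hBddD (⟨s, hs⟩ : S)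
    have hws := hwpos s hs
    calc |Vh s - Vstar s| = (|Vh s - Vstar s| / w s) * w s := by field_simp
      _ ≤ D * w s := mul_le_mul_of_nonneg_right h1 hws.le
  have hD0 : 0 ≤ D := by
    obtain ⟨s0, hs0⟩ := hS
    have : |Vh s0 - Vstar s0| / w s0 ≤ D := le_ciSup hBddD (⟨s0, hs0⟩ : S)
    have := div_nonneg (abs_nonneg (Vh s0 - Vstar s0)) (hwpos s0 hs0).le
    linarith
  -- per-state bound
  have key : ∀ s ∈ S, |Vh s - Vstar s| ≤ (γ * κ * D + K1 * t) * w s := by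
    intro s hs
    have hws := hwpos s hs
    set fh : ↥A → Fin J → ℝ := fun a j => C s a j + γ * Vh (g s (a : Fin n → ℝ) j) with hfh
    set fs : ↥A → Fin J → ℝ := fun a j => C s a j + γ * Vstar (g s (a : Fin n → ℝ) j) with hfs
    have hb_fs : ∀ (a : ↥A) j, |fs a j| ≤ K1 * w s := by
      intro a j
      have hg := hgS s hs a a.2 j
      have h1 := hCb s hs a a.2 j
      have h2 := hVstarBd _ hg
      have h3 := hdrift s hs a a.2 j
      have h4 : |Vstar (g s (a : Fin n → ℝ) j)| ≤ Mstar * (κ * w s) := by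
        calc |Vstar (g s (a : Fin n → ℝ) j)| ≤ Mstar * w (g s (a : Fin n → ℝ) j) := h2
          _ ≤ Mstar * (κ * w s) := mul_le_mul_of_nonneg_left h3 hM0
      calc |fs a j| ≤ |C s (a : Fin n → ℝ) j| + |γ * Vstar (g s (a : Fin n → ℝ) j)| :=
            abs_add_le _ _
        _ ≤ Cbar * w s + γ * (Mstar * (κ * w s)) := by
            refine add_le_add h1 ?_
            rw [abs_mul, abs_of_nonneg hγ0]
            exact mul_le_mul_of_nonneg_left h4 hγ0
        _ = K1 * w s := by rw [hK1def]; ring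
    have hb_diff : ∀ (a : ↥A) j, |fh a j - fs a j| ≤ γ * κ * D * w s := by
      intro a j
      have hg := hgS s hs a a.2 j
      have h2 := hDle _ hg
      have h3 := hdrift s hs a a.2 j
      have : fh a j - fs a j = γ * (Vh (g s (a : Fin n → ℝ) j) - Vstar (g s (a : Fin n → ℝ) j)) := by
        rw [hfh, hfs]; ring
      rw [this, abs_mul, abs_of_nonneg hγ0]
      calc γ * |Vh (g s (a : Fin n → ℝ) j) - Vstar (g s (a : Fin n → ℝ) j)|
          ≤ γ * (D * w (g s (a : Fin n → ℝ) j)) := mul_le_mul_of_nonneg_left h2 hγ0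
        _ ≤ γ * (D * (κ * w s)) := by
            refine mul_le_mul_of_nonneg_left (mul_le_mul_of_nonneg_left h3 hD0) hγ0
        _ = γ * κ * D * w s := by ring
    have hb_fh : ∀ (a : ↥A) j, |fh a j| ≤ K1 * w s + γ * κ * D * w s := by
      intro a j
      have := abs_sub_abs_le_abs_sub (fh a j) (fs a j)
      have h1 := hb_fs a j
      have h2 := hb_diff a j
      linarith [abs_sub_le (fh a j) (fs a j) 0]
    set Fh : ↥A → ℝ := fun a => ⨆ Q : ↥(boxSet J Phat r), expec (Q : Fin J → ℝ) (fh a) with hFh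
    set Fs : ↥A → ℝ := fun a => ⨆ Q : ↥(boxSet J Phat r), expec (Q : Fin J → ℝ) (fs a) with hFs
    set G : ↥A → ℝ := fun a => expec Pc (fs a) with hG
    have hQsimp : ∀ Q : ↥(boxSet J Phat r), (Q : Fin J → ℝ) ∈ stdSimplex ℝ (Fin J) :=
      fun Q => Q.2.1
    have hbddFh : ∀ a, BddAbove (Set.range fun Q : ↥(boxSet J Phat r) => expec (Q : Fin J → ℝ) (fh a)) := by
      intro a
      refine ⟨K1 * w s + γ * κ * D * w s, ?_⟩
      rintro x ⟨Q, rfl⟩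
      exact (abs_le.1 (my_expec_abs_le (hQsimp Q) (hb_fh a))).2
    have hbddFs : ∀ a, BddAbove (Set.range fun Q : ↥(boxSet J Phat r) => expec (Q : Fin J → ℝ) (fs a)) := by
      intro a
      refine ⟨K1 * w s, ?_⟩
      rintro x ⟨Q, rfl⟩
      exact (abs_le.1 (my_expec_abs_le (hQsimp Q) (hb_fs a))).2
    -- deviation of box measures from Pc
    have hQdev : ∀ Q : ↥(boxSet J Phat r), ∑ j, |(Q : Fin J → ℝ) j - Pc j| ≤ t := by
      intro Q
      rw [htdef]
      refine Finset.sum_le_sum (fun j _ => ?_)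
      have h1 := (Q.2.2 j).1
      have h2 := (Q.2.2 j).2
      have : |(Q : Fin J → ℝ) j - Phat j| ≤ r j := abs_le.2 ⟨by linarith, by linarith⟩
      calc |(Q : Fin J → ℝ) j - Pc j| ≤ |(Q : Fin J → ℝ) j - Phat j| + |Phat j - Pc j| :=
            abs_sub_le _ _ _
        _ ≤ |Phat j - Pc j| + r j := by linarith
    -- |Fs a - G a| ≤ K1 * w s * t
    have hFsG : ∀ a, |Fs a - G a| ≤ K1 * w s * t := by
      intro a
      have hdev : ∀ Q : ↥(boxSet J Phat r),
          |expec (Q : Fin J → ℝ) (fs a) - expec Pc (fs a)| ≤ K1 * w s * t := by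
        intro Q
        calc |expec (Q : Fin J → ℝ) (fs a) - expec Pc (fs a)|
            ≤ (K1 * w s) * ∑ j, |(Q : Fin J → ℝ) j - Pc j| :=
              my_expec_sub_prob (by positivity) (hb_fs a)
          _ ≤ K1 * w s * t := mul_le_mul_of_nonneg_left (hQdev Q) (by positivity)
      rw [abs_sub_le_iff]
      constructor
      · rw [sub_le_iff_le_add]
        refine ciSup_le (fun Q => ?_)
        have := (abs_sub_le_iff.1 (hdev Q)).1
        linarith
      · rw [sub_le_iff_le_add]
        have h1 : expec Phat (fs a) ≤ Fs a :=
          le_ciSup (hbddFs a) (⟨Phat, hPhatBox⟩ : ↥(boxSet J Phat r))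
        have := (abs_sub_le_iff.1 (hdev ⟨Phat, hPhatBox⟩)).2
        simp only at this
        linarith
    -- |Fh a - Fs a| ≤ γ κ D w s
    have hFhFs : ∀ a, |Fh a - Fs a| ≤ γ * κ * D * w s := by
      intro a
      refine my_abs_ciSup_sub (hbddFh a) (hbddFs a) (fun Q => ?_)
      exact my_expec_sub_same (hQsimp Q) (hb_diff a)
    -- bddBelow
    have hbddbFh : BddBelow (Set.range Fh) := by
      refine ⟨-(K1 * w s + γ * κ * D * w s), ?_⟩
      rintro x ⟨a, rfl⟩
      have h1 : expec Phat (fh a) ≤ Fh a :=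
        le_ciSup (hbddFh a) (⟨Phat, hPhatBox⟩ : ↥(boxSet J Phat r))
      have h2 := (abs_le.1 (my_expec_abs_le hPhat (hb_fh a))).1
      linarith
    have hbddbFs : BddBelow (Set.range Fs) := by
      refine ⟨-(K1 * w s), ?_⟩
      rintro x ⟨a, rfl⟩
      have h1 : expec Phat (fs a) ≤ Fs a :=
        le_ciSup (hbddFs a) (⟨Phat, hPhatBox⟩ : ↥(boxSet J Phat r))
      have h2 := (abs_le.1 (my_expec_abs_le hPhat (hb_fs a))).1
      linarith
    have hbddbG : BddBelow (Set.range G) := by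
      refine ⟨-(K1 * w s), ?_⟩
      rintro x ⟨a, rfl⟩
      exact (abs_le.1 (my_expec_abs_le hPc (hb_fs a))).1
    have e1 : Vh s = ⨅ a, Fh a := hVhFix s hs
    have e2 : Vstar s = ⨅ a, G a := hVstarFix s hs
    rw [e1, e2]
    have i1 : |(⨅ a, Fh a) - ⨅ a, Fs a| ≤ γ * κ * D * w s :=
      my_abs_ciInf_sub hbddbFh hbddbFs hFhFs
    have i2 : |(⨅ a, Fs a) - ⨅ a, G a| ≤ K1 * w s * t :=
      my_abs_ciInf_sub hbddbFs hbddbG hFsG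
    calc |(⨅ a, Fh a) - ⨅ a, G a|
        ≤ |(⨅ a, Fh a) - ⨅ a, Fs a| + |(⨅ a, Fs a) - ⨅ a, G a| := abs_sub_le _ _ _
      _ ≤ γ * κ * D * w s + K1 * w s * t := add_le_add i1 i2
      _ = (γ * κ * D + K1 * t) * w s := by ring
  -- conclude
  have hDineq : D ≤ γ * κ * D + K1 * t := by
    rw [hDdef, wSupNorm]
    refine ciSup_le (fun s => ?_)
    have h1 := key s s.2
    have hws := hwpos s s.2
    rw [div_le_iff₀ hws]
    exact h1
  have hlt : t * K1 < ε * (1 - γ * κ) := (lt_div_iff₀ hK1).mp ht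
  nlinarith [hD0, hγκ, hK1, ht0]

lemma my_sampleCount_cast {Ω : Type*} {J : ℕ} (X : ℕ → Ω → Fin J) (j : Fin J) (N : ℕ) (ω : Ω) :
    (sampleCount X j N ω : ℝ) = ∑ i ∈ Finset.range N, (if X i ω = j then (1 : ℝ) else 0) := by
  rw [sampleCount, Finset.card_filter]
  push_cast
  rfl

lemma my_sampleCount_sum {Ω : Type*} {J : ℕ} (X : ℕ → Ω → Fin J) (N : ℕ) (ω : Ω) :
    ∑ j, (sampleCount X j N ω : ℝ) = N := by
  have := Finset.card_eq_sum_card_fiberwise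
    (f := fun i => X i ω) (s := Finset.range N) (t := Finset.univ)
    (fun i _ => Finset.mem_univ _)
  rw [Finset.card_range] at this
  have : (N : ℝ) = ((∑ j, ((Finset.range N).filter (fun i => X i ω = j)).card : ℕ) : ℝ) := by
    exact_mod_cast congrArg (Nat.cast : ℕ → ℝ) this
  rw [this]
  push_cast
  rfl

lemma my_denom_pos {J : ℕ} (hJ : 1 ≤ J) {τ0 : Fin J → ℝ} (hτ0 : ∀ j, 1 < τ0 j) (N : ℕ) :
    0 < ∑ k, τ0 k - J + N := by
  have h1 : (J : ℝ) = ∑ _k : Fin J, (1 : ℝ) := by simp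
  have h2 : ∑ _k : Fin J, (1 : ℝ) < ∑ k, τ0 k := by
    refine Finset.sum_lt_sum_of_nonempty ?_ (fun k _ => hτ0 k)
    exact Finset.univ_nonempty_iff.2 (Fin.pos_iff_nonempty.1 hJ)
  have h3 : (0 : ℝ) ≤ N := Nat.cast_nonneg N
  rw [h1]
  linarith

lemma my_bayesCenter_mem {Ω : Type*} {J : ℕ} (hJ : 1 ≤ J) {τ0 : Fin J → ℝ}
    (hτ0 : ∀ j, 1 < τ0 j) (X : ℕ → Ω → Fin J) (N : ℕ) (ω : Ω) :
    bayesCenter τ0 X N ω ∈ stdSimplex ℝ (Fin J) := by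
  have hd := my_denom_pos hJ hτ0 (τ0 := τ0) N
  constructor
  · intro j
    refine div_nonneg ?_ hd.le
    have := (hτ0 j).le
    have : (0:ℝ) ≤ (sampleCount X j N ω : ℝ) := Nat.cast_nonneg _
    linarith [(hτ0 j).le]
  · simp only [bayesCenter]
    rw [← Finset.sum_div, div_eq_one_iff_eq hd.ne']
    rw [Finset.sum_add_distrib, my_sampleCount_sum, Finset.sum_sub_distrib]
    simp

lemma my_lln {Ω : Type*} [MeasurableSpace Ω] (μ : Measure Ω) [IsProbabilityMeasure μ]
    {J : ℕ} (X : ℕ → Ω → Fin J) (hmeas : ∀ i, Measurable (X i))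
    (hindep : iIndepFun X μ)
    {Pc : Fin J → ℝ} (hPc : Pc ∈ stdSimplex ℝ (Fin J))
    (hident : ∀ i j, μ {ω | X i ω = j} = ENNReal.ofReal (Pc j)) :
    ∀ᵐ ω ∂μ, ∀ j, Tendsto (fun N : ℕ => (N : ℝ)⁻¹ * (sampleCount X j N ω : ℝ))
      atTop (𝓝 (Pc j)) := by
  rw [ae_all_iff]
  intro j
  set φ : Fin J → ℝ := fun x => if x = j then 1 else 0 with hφ
  have hφm : Measurable φ := measurable_of_finite φ
  set Y : ℕ → Ω → ℝ := fun i ω => if X i ω = j then 1 else 0 with hY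
  have hYeq : ∀ i, Y i = φ ∘ X i := fun i => rfl
  have hsetmeas : ∀ i, MeasurableSet {ω | X i ω = j} :=
    fun i => hmeas i (measurableSet_singleton j)
  have hYind : ∀ i, Y i = Set.indicator {ω | X i ω = j} (fun _ => (1:ℝ)) := by
    intro i
    ext ω
    simp [hY, Set.indicator_apply, Set.mem_setOf_eq]
  have hint : Integrable (Y 0) μ := by
    rw [hYind 0]
    exact (integrable_const (1:ℝ)).indicator (hsetmeas 0)
  have hpind : Pairwise (Function.onFun (IndepFun · · μ) Y) := by
    intro i k hik
    exact (hindep.indepFun hik).comp hφm hφm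
  have hXid : ∀ i, IdentDistrib (X i) (X 0) μ μ := by
    intro i
    refine ⟨(hmeas i).aemeasurable, (hmeas 0).aemeasurable, ?_⟩
    refine MeasureTheory.Measure.ext_iff_singleton.2 (fun a => ?_)
    rw [Measure.map_apply (hmeas i) (measurableSet_singleton a),
      Measure.map_apply (hmeas 0) (measurableSet_singleton a)]
    have e1 : X i ⁻¹' {a} = {ω | X i ω = a} := rfl
    have e2 : X 0 ⁻¹' {a} = {ω | X 0 ω = a} := rfl
    rw [e1, e2, hident i a, hident 0 a]
  have hid : ∀ i, IdentDistrib (Y i) (Y 0) μ μ := fun i => (hXid i).comp hφm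
  have hE : μ[Y 0] = Pc j := by
    rw [hYind 0, MeasureTheory.integral_indicator_const (1:ℝ) (hsetmeas 0), Measure.real, hident 0 j,
      smul_eq_mul, mul_one, ENNReal.toReal_ofReal (hPc.1 j)]
  have := ProbabilityTheory.strong_law_ae Y hint hpind hid
  rw [hE] at this
  filter_upwards [this] with ω hω
  have : ∀ N : ℕ, (N : ℝ)⁻¹ * (sampleCount X j N ω : ℝ)
      = (N : ℝ)⁻¹ • ∑ i ∈ Finset.range N, Y i ω := by
    intro N
    rw [my_sampleCount_cast, smul_eq_mul]
  simpa [this] using hω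

lemma my_frac_tendsto {c : ℕ → ℝ} {p : ℝ}
    (hc : Tendsto (fun N : ℕ => (N : ℝ)⁻¹ * c N) atTop (𝓝 p)) (a b : ℝ) :
    Tendsto (fun N : ℕ => (a + c N) / (b + N)) atTop (𝓝 p) := by
  have h1 : Tendsto (fun N : ℕ => a / N) atTop (𝓝 0) :=
    tendsto_const_div_atTop_nhds_zero_nat a
  have h2 : Tendsto (fun N : ℕ => b / N) atTop (𝓝 0) :=
    tendsto_const_div_atTop_nhds_zero_nat b
  have hc' : Tendsto (fun N : ℕ => c N / N) atTop (𝓝 p) := by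
    refine hc.congr (fun N => ?_)
    rw [div_eq_inv_mul]
  have hnum : Tendsto (fun N : ℕ => a / N + c N / N) atTop (𝓝 (0 + p)) := h1.add hc'
  have hden : Tendsto (fun N : ℕ => b / N + 1) atTop (𝓝 (0 + 1)) := h2.add tendsto_const_nhds
  have hlim : Tendsto (fun N : ℕ => (a / N + c N / N) / (b / N + 1)) atTop (𝓝 ((0 + p) / (0 + 1))) :=
    hnum.div hden (by norm_num)
  simp only [zero_add, div_one] at hlim
  refine hlim.congr' ?_
  filter_upwards [eventually_ge_atTop 1] with N hN
  have hN0 : (N : ℝ) ≠ 0 := Nat.cast_ne_zero.2 (by omega)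
  field_simp

lemma my_center_tendsto {Ω : Type*} {J : ℕ} (τ0 : Fin J → ℝ) (X : ℕ → Ω → Fin J)
    {ω : Ω} {Pc : Fin J → ℝ} {j : Fin J}
    (hc : Tendsto (fun N : ℕ => (N : ℝ)⁻¹ * (sampleCount X j N ω : ℝ)) atTop (𝓝 (Pc j))) :
    Tendsto (fun N : ℕ => bayesCenter τ0 X N ω j) atTop (𝓝 (Pc j)) := by
  have := my_frac_tendsto hc (τ0 j - 1) (∑ k, τ0 k - J)
  refine this.congr (fun N => ?_)
  rw [bayesCenter]

lemma my_radius_tendsto {Ω : Type*} {J : ℕ} (τ0 : Fin J → ℝ) (z : ℝ) (X : ℕ → Ω → Fin J)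
    {ω : Ω} {Pc : Fin J → ℝ} {j : Fin J}
    (hc : Tendsto (fun N : ℕ => bayesCenter τ0 X N ω j) atTop (𝓝 (Pc j))) :
    Tendsto (fun N : ℕ => bayesRadius τ0 z X N ω j) atTop (𝓝 0) := by
  have hinv : Tendsto (fun N : ℕ => ((∑ k, τ0 k - J + N) : ℝ)⁻¹) atTop (𝓝 0) := by
    refine Tendsto.inv_tendsto_atTop ?_
    exact tendsto_atTop_add_const_left _ _ (tendsto_natCast_atTop_atTop)
  have h1 : Tendsto (fun N : ℕ => bayesCenter τ0 X N ω j * (1 - bayesCenter τ0 X N ω j)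
      / (∑ k, τ0 k - J + N)) atTop (𝓝 0) := by
    have := (hc.mul ((tendsto_const_nhds (x := (1:ℝ))).sub hc)).mul hinv
    rw [mul_zero] at this
    refine this.congr (fun N => ?_)
    rw [div_eq_mul_inv]
  have h2 : Tendsto (fun N : ℕ => Real.sqrt (bayesCenter τ0 X N ω j *
      (1 - bayesCenter τ0 X N ω j) / (∑ k, τ0 k - J + N))) atTop (𝓝 0) := by
    have := (Real.continuous_sqrt.tendsto 0).comp h1
    simpa [Function.comp_def] using this
  have := h2.const_mul z
  rw [mul_zero] at this
  exact this.congr (fun N => rfl)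

lemma my_sampleCount_measurable {Ω : Type*} [MeasurableSpace Ω] {J : ℕ}
    {X : ℕ → Ω → Fin J} (hmeas : ∀ i, Measurable (X i)) (j : Fin J) (N : ℕ) :
    Measurable (fun ω => (sampleCount X j N ω : ℝ)) := by
  have : (fun ω => (sampleCount X j N ω : ℝ))
      = fun ω => ∑ i ∈ Finset.range N, (if X i ω = j then (1:ℝ) else 0) := by
    ext ω; exact my_sampleCount_cast X j N ω
  rw [this]
  refine Finset.measurable_sum _ (fun i _ => ?_)
  exact Measurable.ite (hmeas i (measurableSet_singleton j)) measurable_const measurable_const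

lemma my_center_measurable {Ω : Type*} [MeasurableSpace Ω] {J : ℕ} (τ0 : Fin J → ℝ)
    {X : ℕ → Ω → Fin J} (hmeas : ∀ i, Measurable (X i)) (N : ℕ) (j : Fin J) :
    Measurable (fun ω => bayesCenter τ0 X N ω j) :=
  ((measurable_const.add (my_sampleCount_measurable hmeas j N)).div_const _)

lemma my_radius_measurable {Ω : Type*} [MeasurableSpace Ω] {J : ℕ} (τ0 : Fin J → ℝ) (z : ℝ)
    {X : ℕ → Ω → Fin J} (hmeas : ∀ i, Measurable (X i)) (N : ℕ) (j : Fin J) :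
    Measurable (fun ω => bayesRadius τ0 z X N ω j) := by
  have hc := my_center_measurable τ0 hmeas N j
  exact (Measurable.comp Real.continuous_sqrt.measurable ((hc.mul (measurable_const.sub hc)).div_const _)).const_mul z

/-- finite-sample probability guarantee for the episodic Bayesian DROC
optimal value function. -/
theorem episodic_value_finite_sample
    {Ω : Type*} [MeasurableSpace Ω] (μ : Measure Ω) [IsProbabilityMeasure μ]
    (J m n : ℕ) (hJ : 2 ≤ J)
    (S : Set (Fin m → ℝ)) (hS : S.Nonempty) (hScl : IsClosed S)
    (A : Set (Fin n → ℝ)) (hA : A.Nonempty) (hAcp : IsCompact A)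
    (C : (Fin m → ℝ) → (Fin n → ℝ) → Fin J → ℝ)
    (g : (Fin m → ℝ) → (Fin n → ℝ) → Fin J → Fin m → ℝ)
    (hCcont : ∀ j, ContinuousOn (fun p : (Fin m → ℝ) × (Fin n → ℝ) => C p.1 p.2 j) (S ×ˢ A))
    (hgcont : ∀ j, ContinuousOn (fun p : (Fin m → ℝ) × (Fin n → ℝ) => g p.1 p.2 j) (S ×ˢ A))
    (hgS : ∀ s ∈ S, ∀ a ∈ A, ∀ j, g s a j ∈ S)
    (γ : ℝ) (hγ0 : 0 ≤ γ) (hγ1 : γ < 1)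
    (w : (Fin m → ℝ) → ℝ) (hw1 : ∀ s ∈ S, 1 ≤ w s) (hwcont : ContinuousOn w S)
    (Cbar κ : ℝ) (hCbar0 : 0 < Cbar) (hκ0 : 0 ≤ κ)
    (hCb : ∀ s ∈ S, ∀ a ∈ A, ∀ j, |C s a j| ≤ Cbar * w s)
    (hdrift : ∀ s ∈ S, ∀ a ∈ A, ∀ j, w (g s a j) ≤ κ * w s)
    (hγκ : γ * κ < 1)
    (Pc : Fin J → ℝ) (hPc : Pc ∈ stdSimplex ℝ (Fin J))
    (X : ℕ → Ω → Fin J) (hmeas : ∀ i, Measurable (X i))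
    (hindep : iIndepFun X μ)
    (hident : ∀ i j, μ {ω | X i ω = j} = ENNReal.ofReal (Pc j))
    (τ0 : Fin J → ℝ) (hτ0 : ∀ j, 1 < τ0 j)
    (z : ℝ) (hz : 0 < z)
    (Vstar : (Fin m → ℝ) → ℝ) (hVstarBd : ∃ M, ∀ s ∈ S, |Vstar s| ≤ M * w s)
    (hVstarFix : ∀ s ∈ S, Vstar s = trueBellman A Pc C g γ Vstar s)
    (Vhat : ℕ → Ω → (Fin m → ℝ) → ℝ)
    (hVhatBd : ∀ N ω, ∃ M, ∀ s ∈ S, |Vhat N ω s| ≤ M * w s)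
    (hVhatFix : ∀ N ω, ∀ s ∈ S,
      Vhat N ω s =
        robustBellman A (boxSet J (bayesCenter τ0 X N ω) (bayesRadius τ0 z X N ω))
          C g γ (Vhat N ω) s)
    (ε δ : ℝ) (hε : 0 < ε) (hδ0 : 0 < δ) (hδ1 : δ < 1) :
    ∃ N0 : ℕ, ∀ N ≥ N0,
      ENNReal.ofReal (1 - δ) ≤
        μ {ω | wSupNorm S w (fun s => Vhat N ω s - Vstar s) < ε} := by
  classical
  obtain ⟨M, hM⟩ := hVstarBd
  have hM0 : (0:ℝ) ≤ max M 0 := le_max_right _ _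
  have hVstarBd' : ∀ s ∈ S, |Vstar s| ≤ max M 0 * w s := by
    intro s hs
    refine (hM s hs).trans (mul_le_mul_of_nonneg_right (le_max_left _ _) ?_)
    linarith [hw1 s hs]
  have hK1 : 0 < Cbar + γ * (κ * max M 0) := by positivity
  have h1γκ : 0 < 1 - γ * κ := by linarith
  have hc0 : 0 < ε * (1 - γ * κ) / (Cbar + γ * (κ * max M 0)) := by positivity
  set c : ℝ := ε * (1 - γ * κ) / (Cbar + γ * (κ * max M 0)) with hcdef
  set t : ℕ → Ω → ℝ := fun N ω =>
    ∑ j, (|bayesCenter τ0 X N ω j - Pc j| + bayesRadius τ0 z X N ω j) with htdef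
  have hr_nonneg : ∀ N ω (j : Fin J), 0 ≤ bayesRadius τ0 z X N ω j :=
    fun N ω j => mul_nonneg hz.le (Real.sqrt_nonneg _)
  have ht_nonneg : ∀ N ω, 0 ≤ t N ω :=
    fun N ω => Finset.sum_nonneg (fun j _ => add_nonneg (abs_nonneg _) (hr_nonneg N ω j))
  have ht_meas : ∀ N, Measurable (t N) := by
    intro N
    refine Finset.measurable_sum _ (fun j _ => ?_)
    exact (((my_center_measurable τ0 hmeas N j).sub measurable_const).abs).add
      (my_radius_measurable τ0 z hmeas N j)
  have hae : ∀ᵐ ω ∂μ, Tendsto (fun N => t N ω) atTop (𝓝 0) := by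
    filter_upwards [my_lln μ X hmeas hindep hPc hident] with ω hω
    have h0 : Tendsto (fun N => t N ω) atTop (𝓝 (∑ _j : Fin J, (0:ℝ))) := by
      refine tendsto_finset_sum _ (fun j _ => ?_)
      have hcj := my_center_tendsto τ0 X (hω j)
      have h1 : Tendsto (fun N => |bayesCenter τ0 X N ω j - Pc j|) atTop
          (𝓝 |Pc j - Pc j|) := (hcj.sub_const (Pc j)).abs
      rw [sub_self, abs_zero] at h1
      have h2 := my_radius_tendsto τ0 z X hcj
      have h3 := h1.add h2
      rw [add_zero] at h3
      exact h3
    simpa using h0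
  have hTIM : TendstoInMeasure μ t atTop (fun _ => 0) :=
    tendstoInMeasure_of_tendsto_ae (fun N => (ht_meas N).aestronglyMeasurable) hae
  have hev : ∀ᶠ N in atTop,
      μ {x | c ≤ dist (t N x) ((fun _ => (0:ℝ)) x)} < ENNReal.ofReal δ :=
    (tendstoInMeasure_iff_dist.mp hTIM c hc0).eventually_lt_const (by simp [ENNReal.ofReal_pos, hδ0])
  obtain ⟨N0, hN0⟩ := eventually_atTop.1 hev
  refine ⟨N0, fun N hN => ?_⟩
  have hμbad : μ {x | c ≤ dist (t N x) 0} ≤ ENNReal.ofReal δ := (hN0 N hN).le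
  have hsub : {ω | t N ω < c} ⊆
      {ω | wSupNorm S w (fun s => Vhat N ω s - Vstar s) < ε} := by
    intro ω hω
    exact my_det_bound hS hA hgS hγ0 hκ0 hγκ hCbar0 hw1 hCb hdrift hPc hM0
      hVstarBd' hVstarFix (my_bayesCenter_mem (by omega) hτ0 X N ω)
      (hr_nonneg N ω) (hVhatBd N ω) (hVhatFix N ω) hε hω
  have hseteq : {x | c ≤ dist (t N x) 0} = {x | c ≤ t N x} := by
    ext x
    simp [Real.dist_eq, abs_of_nonneg (ht_nonneg N x)]
  have hmeasbad : MeasurableSet {x | c ≤ dist (t N x) 0} := by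
    rw [hseteq]
    exact measurableSet_le measurable_const (ht_meas N)
  have hcompl : {ω | t N ω < c} = {x | c ≤ dist (t N x) 0}ᶜ := by
    rw [hseteq]
    ext x
    simp
  calc ENNReal.ofReal (1 - δ) = 1 - ENNReal.ofReal δ := by
        rw [ENNReal.ofReal_sub 1 hδ0.le, ENNReal.ofReal_one]
    _ ≤ 1 - μ {x | c ≤ dist (t N x) 0} := tsub_le_tsub_left hμbad 1
    _ = μ {ω | t N ω < c} := by
        rw [hcompl, measure_compl hmeasbad (measure_ne_top μ _), measure_univ]
    _ ≤ _ := measure_mono hsub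

end
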